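/- Let q ∈ [0,1] satisfy q = tanh²(β)·( ((1+q)/2)^k·(1 + 1/(2^k−1)) − 1/(2^k−1) ). For any finite β (tanh²(β) < 1) and any k ≥ 1, q = 0 is the unique solution in [0,1); moreover q = 1 is a solution if and only if tanh²(β) = 1. -/

import Mathlib

lemma aux_pow_le (k : ℕ) {q : ℝ} (hq : 0 ≤ q) (hq1 : q ≤ 1) :
    (1 + q) ^ k ≤ 1 + (2 ^ k - 1) * q := by
  induction k with
  | zero => simp
  | succ n ih =>
      have h1 : (0:ℝ) ≤ (2:ℝ) ^ n - 1 := by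
        have : (1:ℝ) ≤ 2 ^ n := one_le_pow₀ (by norm_num)
        linarith
      calc (1 + q) ^ (n + 1) = (1 + q) * (1 + q) ^ n := by ring
        _ ≤ (1 + q) * (1 + (2 ^ n - 1) * q) := by
            apply mul_le_mul_of_nonneg_left ih (by linarith)
        _ ≤ 1 + (2 ^ (n + 1) - 1) * q := by
            have h2 : q * q ≤ q := by nlinarith
            have h3 : (2:ℝ) ^ (n+1) = 2 * 2 ^ n := by ring
            nlinarith

/-- Stationary overlap equation for the uniform balanced-function ensemble:
for `tanh²β < 1` the only solution in `[0,1)` is `q = 0`; `q = 1` is a solution iff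
`tanh²β = 1`. -/
theorem stmt9 (k : ℕ) (hk : 1 ≤ k) (β : ℝ)
    (g : ℝ → ℝ)
    (hg : ∀ q, g q = Real.tanh β ^ 2 *
      (((1 + q) / 2) ^ k * (1 + 1 / (2 ^ k - 1)) - 1 / (2 ^ k - 1))) :
    (Real.tanh β ^ 2 < 1 → ∀ q ∈ Set.Ico (0:ℝ) 1, (g q = q ↔ q = 0)) ∧
    (g 1 = 1 ↔ Real.tanh β ^ 2 = 1) := by
  set t := Real.tanh β ^ 2 with ht
  have ht0 : 0 ≤ t := sq_nonneg _
  have h2k : (2:ℝ) ≤ 2 ^ k := by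
    calc (2:ℝ) = 2 ^ 1 := by norm_num
    _ ≤ 2 ^ k := pow_le_pow_right₀ (by norm_num) hk
  have hD : (0:ℝ) < 2 ^ k - 1 := by linarith
  have hDne : (2:ℝ) ^ k - 1 ≠ 0 := ne_of_gt hD
  have h2ne : (2:ℝ) ^ k ≠ 0 := by positivity
  have hg' : ∀ q : ℝ, g q = t * ((1 + q) ^ k - 1) / (2 ^ k - 1) := by
    intro q
    rw [hg q, div_pow]
    field_simp
    ring
  constructor
  · intro htl q hq
    obtain ⟨hq0, hq1⟩ := hq
    constructor
    · intro hfix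
      rw [hg' q] at hfix
      by_contra hne
      have hqpos : 0 < q := lt_of_le_of_ne hq0 (Ne.symm hne)
      have hub : (1 + q) ^ k ≤ 1 + (2 ^ k - 1) * q := aux_pow_le k hq0 hq1.le
      have hlb : (1:ℝ) ≤ (1 + q) ^ k := one_le_pow₀ (by linarith)
      have heq : t * ((1 + q) ^ k - 1) = q * (2 ^ k - 1) := by
        field_simp at hfix
        linarith [hfix]
      nlinarith [mul_pos hqpos hD, mul_le_mul_of_nonneg_left hub ht0]
    · intro h
      rw [hg' q, h]
      norm_num
  · rw [hg' 1]
    constructor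
    · intro h
      have : (1 + (1:ℝ)) ^ k = 2 ^ k := by norm_num
      rw [this] at h
      field_simp at h
      linarith
    · intro h
      have : (1 + (1:ℝ)) ^ k = 2 ^ k := by norm_num
      rw [this, h]
      field_simp
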